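/- Let c > 0 and let s(x) = ((x+1)/2)·log((x+1)/2) − ((x−1)/2)·log((x−1)/2) for x > 1. Then lim_{t→∞} [s(cosh(ct)) − c·t] = 1 − 2·log 2; that is, the entanglement entropy S_A(t) = s(cosh(ct)) satisfies S_A(t) ∼ c·t + 1 − 2·log 2, growing linearly at rate c. -/

import Mathlib

open Real Filter Topology

/-- The function relating entanglement entropy to Rényi entropy of a single bosonic mode. -/
noncomputable def entFun (x : ℝ) : ℝ :=
  ((x + 1) / 2) * Real.log ((x + 1) / 2) - ((x - 1) / 2) * Real.log ((x - 1) / 2)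

lemma entFun_aux (u : ℝ) (hu : 1 < u) :
    entFun ((u + u⁻¹) / 2) - Real.log u =
      ((u + 1) ^ 2 / (2 * u * (u - 1))) * ((u - 1) * Real.log (1 + 2 / (u - 1)))
        + 2 * Real.log (1 - 1 / u) - 2 * Real.log 2 := by
  have hu0 : (0 : ℝ) < u := lt_trans one_pos hu
  have hum : (0 : ℝ) < u - 1 := by linarith
  have hup : (0 : ℝ) < u + 1 := by linarith
  have hx1 : ((u + u⁻¹) / 2 + 1) / 2 = (u + 1) ^ 2 / (4 * u) := by
    field_simp; ring
  have hx2 : ((u + u⁻¹) / 2 - 1) / 2 = (u - 1) ^ 2 / (4 * u) := by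
    field_simp; ring
  have h4u : Real.log (4 * u) = 2 * Real.log 2 + Real.log u := by
    rw [Real.log_mul (by norm_num) hu0.ne', show (4 : ℝ) = 2 ^ 2 by norm_num,
      Real.log_pow]
    push_cast; ring
  have hlA : Real.log ((u + 1) ^ 2 / (4 * u)) =
      2 * Real.log (u + 1) - (2 * Real.log 2 + Real.log u) := by
    rw [Real.log_div (by positivity) (by positivity), Real.log_pow, h4u]
    push_cast; ring
  have hlB : Real.log ((u - 1) ^ 2 / (4 * u)) =
      2 * Real.log (u - 1) - (2 * Real.log 2 + Real.log u) := by
    rw [Real.log_div (by positivity) (by positivity), Real.log_pow, h4u]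
    push_cast; ring
  have hr1 : (1 : ℝ) + 2 / (u - 1) = (u + 1) / (u - 1) := by field_simp; ring
  have hl1 : Real.log (1 + 2 / (u - 1)) = Real.log (u + 1) - Real.log (u - 1) := by
    rw [hr1, Real.log_div hup.ne' hum.ne']
  have hr2 : (1 : ℝ) - 1 / u = (u - 1) / u := by field_simp
  have hl2 : Real.log (1 - 1 / u) = Real.log (u - 1) - Real.log u := by
    rw [hr2, Real.log_div hum.ne' hu0.ne']
  unfold entFun
  rw [hx1, hx2, hlA, hlB, hl1, hl2]
  field_simp
  ring

lemma lim_aux :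
    Tendsto (fun u : ℝ => entFun ((u + u⁻¹) / 2) - Real.log u) atTop
      (𝓝 (1 - 2 * Real.log 2)) := by
  have hinv : Tendsto (fun u : ℝ => u⁻¹) atTop (𝓝 (0 : ℝ)) := tendsto_inv_atTop_zero
  -- first factor
  have h1 : Tendsto (fun u : ℝ => (1 + u⁻¹) ^ 2 / (2 * (1 - u⁻¹))) atTop
      (𝓝 (1 / 2)) := by
    have hnum : Tendsto (fun u : ℝ => (1 + u⁻¹) ^ 2) atTop (𝓝 1) := by
      have := ((tendsto_const_nhds (x := (1:ℝ))).add hinv).pow 2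
      simpa using this
    have hden : Tendsto (fun u : ℝ => 2 * (1 - u⁻¹)) atTop (𝓝 2) := by
      have := ((tendsto_const_nhds (x := (1:ℝ))).sub hinv).const_mul (2 : ℝ)
      simpa using this
    exact hnum.div hden (by norm_num)
  have h1' : Tendsto (fun u : ℝ => (u + 1) ^ 2 / (2 * u * (u - 1))) atTop
      (𝓝 (1 / 2)) := by
    refine h1.congr' ?_
    filter_upwards [eventually_gt_atTop (1 : ℝ)] with u hu
    have hu0 : (0 : ℝ) < u := lt_trans one_pos hu
    have hum : u - 1 ≠ 0 := by intro h; nlinarith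
    field_simp
  have h2 : Tendsto (fun u : ℝ => (u - 1) * Real.log (1 + 2 / (u - 1))) atTop
      (𝓝 2) := by
    have h := Real.tendsto_mul_log_one_add_div_atTop 2
    have hsub : Tendsto (fun u : ℝ => u - 1) atTop atTop :=
      tendsto_atTop_add_const_right atTop (-1) tendsto_id
    exact h.comp hsub
  have h3 : Tendsto (fun u : ℝ => 2 * Real.log (1 - 1 / u)) atTop (𝓝 0) := by
    have hbase : Tendsto (fun u : ℝ => 1 - 1 / u) atTop (𝓝 1) := by
      have := (tendsto_const_nhds (x := (1:ℝ))).sub (tendsto_inv_atTop_zero : Tendsto (fun u : ℝ => u⁻¹) atTop (𝓝 0))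
      simp only [one_div]
      simpa using this
    have hlog : Tendsto (fun u : ℝ => Real.log (1 - 1 / u)) atTop (𝓝 0) := by
      have := (Real.continuousAt_log (by norm_num : (1:ℝ) ≠ 0)).tendsto.comp hbase
      simpa [Function.comp_def] using this
    simpa using hlog.const_mul (2 : ℝ)
  have hsum : Tendsto (fun u : ℝ =>
      ((u + 1) ^ 2 / (2 * u * (u - 1))) * ((u - 1) * Real.log (1 + 2 / (u - 1)))
        + 2 * Real.log (1 - 1 / u) - 2 * Real.log 2) atTop
      (𝓝 (1 - 2 * Real.log 2)) := by
    have := ((h1'.mul h2).add h3).sub_const (2 * Real.log 2)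
    have e : 1 / 2 * 2 + 0 - 2 * Real.log 2 = 1 - 2 * Real.log 2 := by norm_num
    rwa [e] at this
  refine hsum.congr' ?_
  filter_upwards [eventually_gt_atTop (1 : ℝ)] with u hu
  exact (entFun_aux u hu).symm

/-- The entanglement entropy S_A(t) = s(cosh(ct)) grows linearly at rate c:
S_A(t) − ct → 1 − 2·log 2 as t → ∞. -/
theorem stmt_16 (c : ℝ) (hc : 0 < c) :
    Tendsto (fun t => entFun (Real.cosh (c * t)) - c * t) atTop
      (𝓝 (1 - 2 * Real.log 2)) := by
  have hct : Tendsto (fun t : ℝ => c * t) atTop atTop := by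
    exact Tendsto.const_mul_atTop hc tendsto_id
  have hexp : Tendsto (fun t : ℝ => Real.exp (c * t)) atTop atTop :=
    Real.tendsto_exp_atTop.comp hct
  have := lim_aux.comp hexp
  refine this.congr (fun t => ?_)
  simp only [Function.comp]
  rw [Real.cosh_eq, Real.exp_neg, Real.log_exp]
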